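/- For n = 3 qubits, the star subalgebra A of Matrix (Fin 3 → Fin 2) (Fin 3 → Fin 2) ℂ generated by the collective spin operators {S_x, S_y, S_z} admits a Wedderburn decomposition of the form (M_2 ⊗ I_2) ⊕ M_4: there exist a bijection e : (Fin 3 → Fin 2) ≃ (Fin 2 × Fin 2) ⊕ Fin 4 and a unitary matrix U such that for every M, M ∈ A if and only if there exist B ∈ Matrix (Fin 2) (Fin 2) ℂ and C ∈ Matrix (Fin 4) (Fin 4) ℂ with Uᴴ * M * U, reindexed along e, equal to fromBlocks (B ⊗ₖ (1 : Matrix (Fin 2) (Fin 2) ℂ)) 0 0 C. -/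

import Mathlib

open Matrix Kronecker

/-- The 2×2 Pauli matrices. -/
def pauliX : Matrix (Fin 2) (Fin 2) ℂ := !![0, 1; 1, 0]
def pauliY : Matrix (Fin 2) (Fin 2) ℂ := !![0, -Complex.I; Complex.I, 0]
def pauliZ : Matrix (Fin 2) (Fin 2) ℂ := !![1, 0; 0, -1]

/-- The collective spin operator: the sum over sites i of the operator acting
as σ on qubit i and as the identity on all other qubits. -/
noncomputable def collectiveSpin (n : ℕ) (σ : Matrix (Fin 2) (Fin 2) ℂ) :
    Matrix (Fin n → Fin 2) (Fin n → Fin 2) ℂ :=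
  fun x y => ∑ i : Fin n,
    σ (x i) (y i) * ∏ j ∈ Finset.univ.erase i, (if x j = y j then (1 : ℂ) else 0)

/-- For three qubits, the collective-noise algebra decomposes as
(M_2 ⊗ I_2) ⊕ M_4. -/
abbrev QB := Fin 3 → Fin 2
abbrev II := (Fin 2 × Fin 2) ⊕ Fin 4

lemma collectiveSpin_three (σ : Matrix (Fin 2) (Fin 2) ℂ) (x y : Fin 3 → Fin 2) :
    collectiveSpin 3 σ x y =
      σ (x 0) (y 0) * ((if x 1 = y 1 then 1 else 0) * (if x 2 = y 2 then (1:ℂ) else 0))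
    + σ (x 1) (y 1) * ((if x 0 = y 0 then 1 else 0) * (if x 2 = y 2 then (1:ℂ) else 0))
    + σ (x 2) (y 2) * ((if x 0 = y 0 then 1 else 0) * (if x 1 = y 1 then (1:ℂ) else 0)) := by
  have h0 : (Finset.univ.erase (0 : Fin 3)) = {1, 2} := by decide
  have h1 : (Finset.univ.erase (1 : Fin 3)) = {0, 2} := by decide
  have h2 : (Finset.univ.erase (2 : Fin 3)) = {0, 1} := by decide
  show (∑ i : Fin 3, _) = _
  rw [Fin.sum_univ_three, h0, h1, h2,
    Finset.prod_pair (by decide), Finset.prod_pair (by decide), Finset.prod_pair (by decide)]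

namespace CNW

noncomputable section
open Complex (I)

def s2 : ℂ := (Real.sqrt 2 : ℝ)
def s3 : ℂ := (Real.sqrt 3 : ℝ)
lemma s2_sq : s2 * s2 = 2 := by
  rw [s2, ← Complex.ofReal_mul, Real.mul_self_sqrt (by norm_num)]; norm_num
lemma s3_sq : s3 * s3 = 3 := by
  rw [s3, ← Complex.ofReal_mul, Real.mul_self_sqrt (by norm_num)]; norm_num
lemma star_s2 : star s2 = s2 := by rw [s2]; exact Complex.conj_ofReal _
lemma star_s3 : star s3 = s3 := by rw [s3]; exact Complex.conj_ofReal _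
lemma conj_s2 : (starRingEnd ℂ) s2 = s2 := star_s2
lemma conj_s3 : (starRingEnd ℂ) s3 = s3 := star_s3
lemma s2_pow : s2^2 = 2 := by rw [pow_two, s2_sq]
lemma s3_pow : s3^2 = 3 := by rw [pow_two, s3_sq]

def dec : II → QB :=
  Sum.elim (fun p => ![![![0,0,1],![0,1,0]], ![![0,1,1],![1,0,1]]] p.1 p.2)
    (fun k => ![![0,0,0],![1,0,0],![1,1,0],![1,1,1]] k)

def enc (x : QB) : II :=
  if x 0 = 0 then
    (if x 1 = 0 then (if x 2 = 0 then .inr 0 else .inl (0,0))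
     else (if x 2 = 0 then .inl (0,1) else .inl (1,0)))
  else
    (if x 1 = 0 then (if x 2 = 0 then .inr 1 else .inl (1,1))
     else (if x 2 = 0 then .inr 2 else .inr 3))

def eQI : QB ≃ II := ⟨enc, dec, by decide, by decide⟩

def ρ : Fin 2 × Fin 2 → Fin 4 := fun p => ![![0,1],![2,3]] p.1 p.2
def bl (A : Matrix (Fin 4) (Fin 4) ℂ) : Matrix (Fin 2 × Fin 2) (Fin 2 × Fin 2) ℂ :=
  of fun p q => A (ρ p) (ρ q)
def br (A : Matrix (Fin 4) (Fin 4) ℂ) : Matrix (Fin 2 × Fin 2) (Fin 4) ℂ :=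
  of fun p k => A (ρ p) k
def rb (A : Matrix (Fin 4) (Fin 4) ℂ) : Matrix (Fin 4) (Fin 2 × Fin 2) ℂ :=
  of fun k q => A k (ρ q)

def va : ℂ := s2/2
def vb : ℂ := s3/3
def vc : ℂ := s2*s3/6
def vd : ℂ := s2*s3/3

def W : Matrix II II ℂ :=
  fromBlocks
    (bl !![va,vc,0,0; -va,vc,0,0; 0,0,0,vd; 0,0,va,-vc])
    (br !![0,vb,0,0; 0,vb,0,0; 0,0,vb,0; 0,0,vb,0])
    (rb !![0,0,0,0; 0,-vd,0,0; 0,0,-va,-vc; 0,0,0,0])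
    !![1,0,0,0; 0,vb,0,0; 0,0,vb,0; 0,0,0,1]

def cxM : Matrix (Fin 4) (Fin 4) ℂ := !![0,s3,0,0; s3,0,2,0; 0,2,0,s3; 0,0,s3,0]
def cyM : Matrix (Fin 4) (Fin 4) ℂ :=
  !![0,-s3*I,0,0; s3*I,0,-2*I,0; 0,2*I,0,-s3*I; 0,0,s3*I,0]
def czM : Matrix (Fin 4) (Fin 4) ℂ := !![3,0,0,0; 0,1,0,0; 0,0,-1,0; 0,0,0,-3]

def DxM : Matrix II II ℂ := fromBlocks (pauliX ⊗ₖ 1) 0 0 cxM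
def DyM : Matrix II II ℂ := fromBlocks (pauliY ⊗ₖ 1) 0 0 cyM
def DzM : Matrix II II ℂ := fromBlocks (pauliZ ⊗ₖ 1) 0 0 czM

def SxE : Matrix II II ℂ :=
  fromBlocks
    (bl !![0,0,1,1; 0,0,1,0; 1,1,0,0; 1,0,0,0])
    (br !![1,0,0,0; 1,0,1,0; 0,0,0,1; 0,1,0,1])
    (rb !![1,1,0,0; 0,0,0,1; 0,1,0,0; 0,0,1,1])
    !![0,1,0,0; 1,0,1,0; 0,1,0,1; 0,0,1,0]

def SyE : Matrix II II ℂ :=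
  fromBlocks
    (bl !![0,0,-I,-I; 0,0,-I,0; I,I,0,0; I,0,0,0])
    (br !![I,0,0,0; I,0,-I,0; 0,0,0,-I; 0,I,0,-I])
    (rb !![-I,-I,0,0; 0,0,0,-I; 0,I,0,0; 0,0,I,I])
    !![0,-I,0,0; I,0,-I,0; 0,I,0,-I; 0,0,I,0]

def SzE : Matrix II II ℂ :=
  fromBlocks
    (bl !![1,0,0,0; 0,1,0,0; 0,0,-1,0; 0,0,0,-1])
    0 0 !![3,0,0,0; 0,1,0,0; 0,0,-1,0; 0,0,0,-3]

set_option maxHeartbeats 1000000 in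
lemma W_unitary : Wᴴ * W = 1 := by
  ext i j
  fin_cases i <;> fin_cases j <;>
  · simp [Matrix.mul_apply, Fintype.sum_sum_type, Fintype.sum_prod_type,
      Fin.sum_univ_succ, W, bl, br, rb, ρ, fromBlocks, Matrix.one_apply,
      Matrix.vecHead, Matrix.vecTail, conj_s2, conj_s3, map_ofNat, map_inv₀, map_div₀,
      va, vb, vc, vd]
    try ring_nf
    try simp [s2_pow, s3_pow]
    try norm_num
    try ring
    try (rw [if_neg (by decide)])
set_option maxHeartbeats 1000000 in
lemma SxE_W : SxE * W = W * DxM := by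
  ext i j
  fin_cases i <;> fin_cases j <;>
  · simp [Matrix.mul_apply, Fintype.sum_sum_type, Fintype.sum_prod_type,
      Fin.sum_univ_succ, W, SxE, DxM, bl, br, rb, ρ, fromBlocks, Matrix.one_apply,
      Matrix.kroneckerMap_apply, pauliX, cxM,
      Matrix.vecHead, Matrix.vecTail, va, vb, vc, vd]
    try ring_nf
    try simp [s2_pow, s3_pow]
    try norm_num
    try ring
    try (rw [if_neg (by decide)])
set_option maxHeartbeats 1000000 in
lemma SyE_W : SyE * W = W * DyM := by
  ext i j
  fin_cases i <;> fin_cases j <;>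
  · simp [Matrix.mul_apply, Fintype.sum_sum_type, Fintype.sum_prod_type,
      Fin.sum_univ_succ, W, SyE, DyM, bl, br, rb, ρ, fromBlocks, Matrix.one_apply,
      Matrix.kroneckerMap_apply, pauliY, cyM,
      Matrix.vecHead, Matrix.vecTail, va, vb, vc, vd]
    try ring_nf
    try simp [s2_pow, s3_pow]
    try norm_num
    try ring
    try (rw [if_neg (by decide)])
set_option maxHeartbeats 1000000 in
lemma SzE_W : SzE * W = W * DzM := by
  ext i j
  fin_cases i <;> fin_cases j <;>
  · simp [Matrix.mul_apply, Fintype.sum_sum_type, Fintype.sum_prod_type,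
      Fin.sum_univ_succ, W, SzE, DzM, bl, br, rb, ρ, fromBlocks, Matrix.one_apply,
      Matrix.kroneckerMap_apply, pauliZ, czM,
      Matrix.vecHead, Matrix.vecTail, va, vb, vc, vd]
    try ring_nf
    try simp [s2_pow, s3_pow]
    try norm_num
    try ring
    try (rw [if_neg (by decide)])
set_option maxHeartbeats 1000000 in
lemma reindex_Sx : Matrix.reindex eQI eQI (collectiveSpin 3 pauliX) = SxE := by
  ext i j
  rw [Matrix.reindex_apply, Matrix.submatrix_apply]
  have hsymm : ∀ i, eQI.symm i = dec i := fun _ => rfl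
  rw [hsymm, hsymm, collectiveSpin_three]
  fin_cases i <;> fin_cases j <;>
  · simp [dec, SxE, bl, br, rb, ρ, fromBlocks, pauliX,
      Matrix.vecHead, Matrix.vecTail]
    try norm_num
set_option maxHeartbeats 1000000 in
lemma reindex_Sy : Matrix.reindex eQI eQI (collectiveSpin 3 pauliY) = SyE := by
  ext i j
  rw [Matrix.reindex_apply, Matrix.submatrix_apply]
  have hsymm : ∀ i, eQI.symm i = dec i := fun _ => rfl
  rw [hsymm, hsymm, collectiveSpin_three]
  fin_cases i <;> fin_cases j <;>
  · simp [dec, SyE, bl, br, rb, ρ, fromBlocks, pauliY,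
      Matrix.vecHead, Matrix.vecTail]
    try norm_num
set_option maxHeartbeats 1000000 in
lemma reindex_Sz : Matrix.reindex eQI eQI (collectiveSpin 3 pauliZ) = SzE := by
  ext i j
  rw [Matrix.reindex_apply, Matrix.submatrix_apply]
  have hsymm : ∀ i, eQI.symm i = dec i := fun _ => rfl
  rw [hsymm, hsymm, collectiveSpin_three]
  fin_cases i <;> fin_cases j <;>
  · simp [dec, SzE, bl, br, rb, ρ, fromBlocks, pauliZ,
      Matrix.vecHead, Matrix.vecTail]
    try norm_num

lemma W_unitary' : W * Wᴴ = 1 := mul_eq_one_comm.mp W_unitary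

/-! ### The block star-subalgebra machinery -/

def LM : Matrix (Fin 2) (Fin 2) ℂ →ₗ[ℂ] Matrix II II ℂ where
  toFun B := fromBlocks (B ⊗ₖ (1 : Matrix (Fin 2) (Fin 2) ℂ)) 0 0 0
  map_add' B B' := by
    simp only [Matrix.fromBlocks_add, add_zero, ← Matrix.add_kronecker]
  map_smul' r B := by
    simp only [Matrix.fromBlocks_smul, smul_zero, ← Matrix.smul_kronecker, RingHom.id_apply]

def QM : Matrix (Fin 4) (Fin 4) ℂ →ₗ[ℂ] Matrix II II ℂ where
  toFun C := fromBlocks 0 0 0 C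
  map_add' C C' := by
    simp only [Matrix.fromBlocks_add, add_zero]
  map_smul' r C := by
    simp only [Matrix.fromBlocks_smul, smul_zero, RingHom.id_apply]

lemma LM_mul (B B' : Matrix (Fin 2) (Fin 2) ℂ) : LM B * LM B' = LM (B * B') := by
  show fromBlocks _ _ _ _ * fromBlocks _ _ _ _ = _
  rw [Matrix.fromBlocks_multiply, ← Matrix.mul_kronecker_mul, Matrix.one_mul]
  simp [LM]

lemma QM_mul (C C' : Matrix (Fin 4) (Fin 4) ℂ) : QM C * QM C' = QM (C * C') := by
  show fromBlocks _ _ _ _ * fromBlocks _ _ _ _ = _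
  rw [Matrix.fromBlocks_multiply]
  simp [QM]

lemma LQ_mul (B : Matrix (Fin 2) (Fin 2) ℂ) (C : Matrix (Fin 4) (Fin 4) ℂ) :
    LM B * QM C = 0 := by
  show fromBlocks _ _ _ _ * fromBlocks _ _ _ _ = _
  rw [Matrix.fromBlocks_multiply]
  simp

lemma QL_mul (B : Matrix (Fin 2) (Fin 2) ℂ) (C : Matrix (Fin 4) (Fin 4) ℂ) :
    QM C * LM B = 0 := by
  show fromBlocks _ _ _ _ * fromBlocks _ _ _ _ = _
  rw [Matrix.fromBlocks_multiply]
  simp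

lemma LQ_one : LM 1 + QM 1 = 1 := by
  show fromBlocks ((1:Matrix (Fin 2) (Fin 2) ℂ) ⊗ₖ 1) 0 0 0 + fromBlocks 0 0 0 1 = 1
  rw [Matrix.one_kronecker_one, Matrix.fromBlocks_add]
  simp [Matrix.fromBlocks_one]

lemma LM_star (B : Matrix (Fin 2) (Fin 2) ℂ) : (LM B)ᴴ = LM Bᴴ := by
  ext (⟨i,i'⟩|k) (⟨j,j'⟩|l) <;>
    simp only [LM, LinearMap.coe_mk, AddHom.coe_mk, Matrix.conjTranspose_apply,
      Matrix.fromBlocks_apply₁₁, Matrix.fromBlocks_apply₁₂, Matrix.fromBlocks_apply₂₁,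
      Matrix.fromBlocks_apply₂₂, Matrix.kroneckerMap_apply, Matrix.one_apply,
      Matrix.zero_apply, star_zero]
  rcases eq_or_ne i' j' with h | h <;> simp [h, eq_comm]

lemma QM_star (C : Matrix (Fin 4) (Fin 4) ℂ) : (QM C)ᴴ = QM Cᴴ := by
  ext (⟨i,i'⟩|k) (⟨j,j'⟩|l) <;>
    simp [QM, Matrix.conjTranspose_apply]

lemma Dx_decomp : DxM = LM pauliX + QM cxM := by
  show _ = fromBlocks _ _ _ _ + fromBlocks _ _ _ _
  rw [Matrix.fromBlocks_add]; simp [DxM]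
lemma Dy_decomp : DyM = LM pauliY + QM cyM := by
  show _ = fromBlocks _ _ _ _ + fromBlocks _ _ _ _
  rw [Matrix.fromBlocks_add]; simp [DyM]
lemma Dz_decomp : DzM = LM pauliZ + QM czM := by
  show _ = fromBlocks _ _ _ _ + fromBlocks _ _ _ _
  rw [Matrix.fromBlocks_add]; simp [DzM]

def Ealg : StarSubalgebra ℂ (Matrix II II ℂ) :=
  StarAlgebra.adjoin ℂ ({DxM, DyM, DzM} : Set (Matrix II II ℂ))

lemma hDx : DxM ∈ Ealg := StarAlgebra.subset_adjoin ℂ _ (by simp)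
lemma hDy : DyM ∈ Ealg := StarAlgebra.subset_adjoin ℂ _ (by simp)
lemma hDz : DzM ∈ Ealg := StarAlgebra.subset_adjoin ℂ _ (by simp)

/-- forward: everything in the adjoin has block form -/
lemma fwd {N : Matrix II II ℂ} (hN : N ∈ Ealg) :
    ∃ B C, N = LM B + QM C := by
  induction hN using StarAlgebra.adjoin_induction with
  | mem x hx =>
      rcases hx with rfl | rfl | rfl
      exacts [⟨pauliX, cxM, Dx_decomp⟩, ⟨pauliY, cyM, Dy_decomp⟩, ⟨pauliZ, czM, Dz_decomp⟩]
  | algebraMap r =>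
      refine ⟨algebraMap ℂ _ r, algebraMap ℂ _ r, ?_⟩
      rw [Algebra.algebraMap_eq_smul_one, Algebra.algebraMap_eq_smul_one,
        Algebra.algebraMap_eq_smul_one, LinearMap.map_smul, LinearMap.map_smul,
        ← smul_add, LQ_one]
  | add x y _ _ hx hy =>
      obtain ⟨B, C, rfl⟩ := hx; obtain ⟨B', C', rfl⟩ := hy
      exact ⟨B + B', C + C', by rw [map_add, map_add]; abel⟩
  | mul x y _ _ hx hy =>
      obtain ⟨B, C, rfl⟩ := hx; obtain ⟨B', C', rfl⟩ := hy
      refine ⟨B * B', C * C', ?_⟩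
      rw [add_mul, mul_add, mul_add, LM_mul, QM_mul, LQ_mul, QL_mul, add_zero, zero_add]
  | star x _ hx =>
      obtain ⟨B, C, rfl⟩ := hx
      refine ⟨Bᴴ, Cᴴ, ?_⟩
      show (LM B + QM C)ᴴ = _
      rw [conjTranspose_add, LM_star, QM_star]

/-! ### generation: reverse inclusion -/

lemma smulE {x : Matrix II II ℂ} (r : ℂ) (h : x ∈ Ealg) : r • x ∈ Ealg := by
  rw [Algebra.smul_def]; exact mul_mem (Ealg.algebraMap_mem r) h

lemma DD (p p' : Matrix (Fin 2) (Fin 2) ℂ) (c c' : Matrix (Fin 4) (Fin 4) ℂ) :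
    (LM p + QM c) * (LM p' + QM c') = LM (p * p') + QM (c * c') := by
  rw [add_mul, mul_add, mul_add, LM_mul, QM_mul, LQ_mul, QL_mul, add_zero, zero_add]

lemma pauli_sq : pauliX*pauliX + pauliY*pauliY + pauliZ*pauliZ = (3:ℂ)•1 := by
  ext i j
  fin_cases i <;> fin_cases j <;>
    simp [pauliX, pauliY, pauliZ, Matrix.mul_apply, Fin.sum_univ_two, Matrix.one_apply,
      Complex.I_mul_I] <;> ring_nf <;> simp [Complex.I_sq] <;> norm_num

set_option maxHeartbeats 1000000 in
lemma c_sq : cxM*cxM + cyM*cyM + czM*czM = (15:ℂ)•1 := by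
  ext i j
  fin_cases i <;> fin_cases j <;>
  · simp [cxM, cyM, czM, Matrix.mul_apply, Fin.sum_univ_four, Matrix.one_apply,
      Matrix.vecHead, Matrix.vecTail]
    try ring_nf
    try simp [s2_pow, s3_pow, Complex.I_sq]
    try norm_num
    try ring

lemma casimir : DxM*DxM + DyM*DyM + DzM*DzM = LM ((3:ℂ)•1) + QM ((15:ℂ)•1) := by
  calc DxM*DxM + DyM*DyM + DzM*DzM
      = (LM (pauliX*pauliX) + LM (pauliY*pauliY) + LM (pauliZ*pauliZ))
        + (QM (cxM*cxM) + QM (cyM*cyM) + QM (czM*czM)) := by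
        rw [Dx_decomp, Dy_decomp, Dz_decomp, DD, DD, DD]; abel
    _ = LM (pauliX*pauliX + pauliY*pauliY + pauliZ*pauliZ)
        + QM (cxM*cxM + cyM*cyM + czM*czM) := by
        rw [map_add, map_add, map_add, map_add]
    _ = LM ((3:ℂ)•1) + QM ((15:ℂ)•1) := by rw [pauli_sq, c_sq]

lemma hP4 : QM 1 ∈ Ealg := by
  have h12 : QM 1 = (12:ℂ)⁻¹ • ((DxM*DxM + DyM*DyM + DzM*DzM) - (3:ℂ)•(1:Matrix II II ℂ)) := by
    rw [casimir, ← LQ_one, smul_add, LinearMap.map_smul, LinearMap.map_smul,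
      add_sub_add_left_eq_sub, ← sub_smul, smul_smul]
    norm_num
  rw [h12]
  exact smulE _ (sub_mem (add_mem (add_mem (mul_mem hDx hDx) (mul_mem hDy hDy))
    (mul_mem hDz hDz)) (smulE _ (one_mem _)))

lemma hP2 : LM 1 ∈ Ealg := by
  have : LM 1 = 1 - QM 1 := by rw [← LQ_one]; abel
  rw [this]; exact sub_mem (one_mem _) hP4

lemma hQx : QM cxM ∈ Ealg := by
  have : QM cxM = QM 1 * DxM := by rw [Dx_decomp, mul_add, QL_mul, QM_mul, one_mul, zero_add]
  rw [this]; exact mul_mem hP4 hDx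
lemma hQy : QM cyM ∈ Ealg := by
  have : QM cyM = QM 1 * DyM := by rw [Dy_decomp, mul_add, QL_mul, QM_mul, one_mul, zero_add]
  rw [this]; exact mul_mem hP4 hDy
lemma hQz : QM czM ∈ Ealg := by
  have : QM czM = QM 1 * DzM := by rw [Dz_decomp, mul_add, QL_mul, QM_mul, one_mul, zero_add]
  rw [this]; exact mul_mem hP4 hDz

lemma hLx : LM pauliX ∈ Ealg := by
  have : LM pauliX = LM 1 * DxM := by rw [Dx_decomp, mul_add, LM_mul, LQ_mul, one_mul, add_zero]
  rw [this]; exact mul_mem hP2 hDx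
lemma hLy : LM pauliY ∈ Ealg := by
  have : LM pauliY = LM 1 * DyM := by rw [Dy_decomp, mul_add, LM_mul, LQ_mul, one_mul, add_zero]
  rw [this]; exact mul_mem hP2 hDy
lemma hLz : LM pauliZ ∈ Ealg := by
  have : LM pauliZ = LM 1 * DzM := by rw [Dz_decomp, mul_add, LM_mul, LQ_mul, one_mul, add_zero]
  rw [this]; exact mul_mem hP2 hDz

lemma R4_mul {X Y : Matrix (Fin 4) (Fin 4) ℂ} (hX : QM X ∈ Ealg) (hY : QM Y ∈ Ealg) :
    QM (X*Y) ∈ Ealg := by rw [← QM_mul]; exact mul_mem hX hY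
lemma R4_smul {X : Matrix (Fin 4) (Fin 4) ℂ} (r : ℂ) (hX : QM X ∈ Ealg) :
    QM (r•X) ∈ Ealg := by rw [LinearMap.map_smul]; exact smulE r hX

lemma R4_star {X : Matrix (Fin 4) (Fin 4) ℂ} (hX : QM X ∈ Ealg) : QM Xᴴ ∈ Ealg := by
  rw [← QM_star]; exact star_mem hX

def Eb (k l : Fin 4) : Matrix (Fin 4) (Fin 4) ℂ := Matrix.single k l 1
def Fb (i j : Fin 2) : Matrix (Fin 2) (Fin 2) ℂ := Matrix.single i j 1

def cpM : Matrix (Fin 4) (Fin 4) ℂ := !![0,2*s3,0,0; 0,0,4,0; 0,0,0,2*s3; 0,0,0,0]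

lemma hcp : QM cpM ∈ Ealg := by
  have h : cpM = cxM + I • cyM := by
    ext a b
    fin_cases a <;> fin_cases b <;>
    · simp [cpM, cxM, cyM, Complex.I_mul_I, Matrix.vecHead, Matrix.vecTail]
      try ring_nf
      try simp [Complex.I_sq]
      try ring
  rw [h, map_add]; exact add_mem hQx (R4_smul I hQy)

lemma hcz1 : QM (czM - 1) ∈ Ealg := by rw [map_sub]; exact sub_mem hQz hP4
lemma hcz1' : QM (czM + 1) ∈ Ealg := by rw [map_add]; exact add_mem hQz hP4
lemma hcz3 : QM (czM - (3:ℂ)•1) ∈ Ealg := by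
  rw [map_sub]; exact sub_mem hQz (R4_smul _ hP4)
lemma hcz3' : QM (czM + (3:ℂ)•1) ∈ Ealg := by
  rw [map_add]; exact add_mem hQz (R4_smul _ hP4)

set_option maxHeartbeats 1000000 in
lemma h00 : Eb 0 0 = (48:ℂ)⁻¹ • ((czM - 1) * ((czM + 1) * (czM + (3:ℂ)•1))) := by
  ext a b
  fin_cases a <;> fin_cases b <;>
  · simp [Eb, Matrix.single, czM, Matrix.mul_apply, Fin.sum_univ_four,
      Matrix.one_apply, Matrix.vecHead, Matrix.vecTail]
    try norm_num

set_option maxHeartbeats 1000000 in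
lemma h11 : Eb 1 1 = (-16:ℂ)⁻¹ • ((czM - (3:ℂ)•1) * ((czM + 1) * (czM + (3:ℂ)•1))) := by
  ext a b
  fin_cases a <;> fin_cases b <;>
  · simp [Eb, Matrix.single, czM, Matrix.mul_apply, Fin.sum_univ_four,
      Matrix.one_apply, Matrix.vecHead, Matrix.vecTail]
    try norm_num

set_option maxHeartbeats 1000000 in
lemma h22 : Eb 2 2 = (16:ℂ)⁻¹ • ((czM - (3:ℂ)•1) * ((czM - 1) * (czM + (3:ℂ)•1))) := by
  ext a b
  fin_cases a <;> fin_cases b <;>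
  · simp [Eb, Matrix.single, czM, Matrix.mul_apply, Fin.sum_univ_four,
      Matrix.one_apply, Matrix.vecHead, Matrix.vecTail]
    try norm_num

set_option maxHeartbeats 1000000 in
lemma h33 : Eb 3 3 = (-48:ℂ)⁻¹ • ((czM - (3:ℂ)•1) * ((czM - 1) * (czM + 1))) := by
  ext a b
  fin_cases a <;> fin_cases b <;>
  · simp [Eb, Matrix.single, czM, Matrix.mul_apply, Fin.sum_univ_four,
      Matrix.one_apply, Matrix.vecHead, Matrix.vecTail]
    try norm_num

set_option maxHeartbeats 1000000 in
lemma h01 : Eb 0 1 = (s3/6) • (Eb 0 0 * cpM) := by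
  ext a b
  fin_cases a <;> fin_cases b <;>
  · simp [Eb, Matrix.single, cpM, Matrix.mul_apply, Fin.sum_univ_four,
      Matrix.vecHead, Matrix.vecTail]
    try ring_nf
    try simp [s3_pow]
    try norm_num

set_option maxHeartbeats 1000000 in
lemma h12 : Eb 1 2 = (4:ℂ)⁻¹ • (Eb 1 1 * cpM) := by
  ext a b
  fin_cases a <;> fin_cases b <;>
  · simp [Eb, Matrix.single, cpM, Matrix.mul_apply, Fin.sum_univ_four,
      Matrix.vecHead, Matrix.vecTail]
    try ring_nf
    try simp [s3_pow]
    try norm_num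

set_option maxHeartbeats 1000000 in
lemma h23 : Eb 2 3 = (s3/6) • (Eb 2 2 * cpM) := by
  ext a b
  fin_cases a <;> fin_cases b <;>
  · simp [Eb, Matrix.single, cpM, Matrix.mul_apply, Fin.sum_univ_four,
      Matrix.vecHead, Matrix.vecTail]
    try ring_nf
    try simp [s3_pow]
    try norm_num

set_option maxHeartbeats 1000000 in
lemma h02 : Eb 0 2 = (4:ℂ)⁻¹ • (Eb 0 1 * cpM) := by
  ext a b
  fin_cases a <;> fin_cases b <;>
  · simp [Eb, Matrix.single, cpM, Matrix.mul_apply, Fin.sum_univ_four,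
      Matrix.vecHead, Matrix.vecTail]
    try ring_nf
    try simp [s3_pow]
    try norm_num

set_option maxHeartbeats 1000000 in
lemma h13 : Eb 1 3 = (s3/6) • (Eb 1 2 * cpM) := by
  ext a b
  fin_cases a <;> fin_cases b <;>
  · simp [Eb, Matrix.single, cpM, Matrix.mul_apply, Fin.sum_univ_four,
      Matrix.vecHead, Matrix.vecTail]
    try ring_nf
    try simp [s3_pow]
    try norm_num

set_option maxHeartbeats 1000000 in
lemma h03 : Eb 0 3 = (s3/6) • (Eb 0 2 * cpM) := by
  ext a b
  fin_cases a <;> fin_cases b <;>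
  · simp [Eb, Matrix.single, cpM, Matrix.mul_apply, Fin.sum_univ_four,
      Matrix.vecHead, Matrix.vecTail]
    try ring_nf
    try simp [s3_pow]
    try norm_num

lemma Eb_star (k l : Fin 4) : (Eb k l)ᴴ = Eb l k := by
  ext a b
  by_cases h1 : k = b <;> by_cases h2 : l = a <;>
    simp [Eb, Matrix.single, Matrix.conjTranspose_apply, h1, h2]

lemma m00 : QM (Eb 0 0) ∈ Ealg := by
  rw [h00]; exact R4_smul _ (R4_mul hcz1 (R4_mul hcz1' hcz3'))
lemma m11 : QM (Eb 1 1) ∈ Ealg := by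
  rw [h11]; exact R4_smul _ (R4_mul hcz3 (R4_mul hcz1' hcz3'))
lemma m22 : QM (Eb 2 2) ∈ Ealg := by
  rw [h22]; exact R4_smul _ (R4_mul hcz3 (R4_mul hcz1 hcz3'))
lemma m33 : QM (Eb 3 3) ∈ Ealg := by
  rw [h33]; exact R4_smul _ (R4_mul hcz3 (R4_mul hcz1 hcz1'))
lemma m01 : QM (Eb 0 1) ∈ Ealg := by rw [h01]; exact R4_smul _ (R4_mul m00 hcp)
lemma m12 : QM (Eb 1 2) ∈ Ealg := by rw [h12]; exact R4_smul _ (R4_mul m11 hcp)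
lemma m23 : QM (Eb 2 3) ∈ Ealg := by rw [h23]; exact R4_smul _ (R4_mul m22 hcp)
lemma m02 : QM (Eb 0 2) ∈ Ealg := by rw [h02]; exact R4_smul _ (R4_mul m01 hcp)
lemma m13 : QM (Eb 1 3) ∈ Ealg := by rw [h13]; exact R4_smul _ (R4_mul m12 hcp)
lemma m03 : QM (Eb 0 3) ∈ Ealg := by rw [h03]; exact R4_smul _ (R4_mul m02 hcp)
lemma m10 : QM (Eb 1 0) ∈ Ealg := by rw [← Eb_star]; exact R4_star m01
lemma m20 : QM (Eb 2 0) ∈ Ealg := by rw [← Eb_star]; exact R4_star m02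
lemma m21 : QM (Eb 2 1) ∈ Ealg := by rw [← Eb_star]; exact R4_star m12
lemma m30 : QM (Eb 3 0) ∈ Ealg := by rw [← Eb_star]; exact R4_star m03
lemma m31 : QM (Eb 3 1) ∈ Ealg := by rw [← Eb_star]; exact R4_star m13
lemma m32 : QM (Eb 3 2) ∈ Ealg := by rw [← Eb_star]; exact R4_star m23

lemma R4_all (k l : Fin 4) : QM (Eb k l) ∈ Ealg := by
  fin_cases k <;> fin_cases l
  exacts [m00, m01, m02, m03, m10, m11, m12, m13, m20, m21, m22, m23, m30, m31, m32, m33]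

lemma Q_mem (C : Matrix (Fin 4) (Fin 4) ℂ) : QM C ∈ Ealg := by
  rw [Matrix.matrix_eq_sum_single C, map_sum]
  refine sum_mem fun k _ => ?_
  rw [map_sum]
  refine sum_mem fun l _ => ?_
  have : Matrix.single k l (C k l) = C k l • Eb k l := by
    rw [Eb, Matrix.smul_single, smul_eq_mul, mul_one]
  rw [this]
  exact R4_smul _ (R4_all k l)

lemma g00 : Fb 0 0 = (2:ℂ)⁻¹ • ((1 : Matrix (Fin 2) (Fin 2) ℂ) + pauliZ) := by
  ext a b
  fin_cases a <;> fin_cases b <;>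
    simp [Fb, Matrix.single, pauliZ, Matrix.one_apply] <;> norm_num
lemma g11 : Fb 1 1 = (2:ℂ)⁻¹ • ((1 : Matrix (Fin 2) (Fin 2) ℂ) - pauliZ) := by
  ext a b
  fin_cases a <;> fin_cases b <;>
    simp [Fb, Matrix.single, pauliZ, Matrix.one_apply] <;> norm_num
lemma g01 : Fb 0 1 = (2:ℂ)⁻¹ • (pauliX + I • pauliY) := by
  ext a b
  fin_cases a <;> fin_cases b <;>
    simp [Fb, Matrix.single, pauliX, pauliY, Complex.I_mul_I] <;> norm_num
lemma g10 : Fb 1 0 = (2:ℂ)⁻¹ • (pauliX - I • pauliY) := by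
  ext a b
  fin_cases a <;> fin_cases b <;>
    simp [Fb, Matrix.single, pauliX, pauliY, Complex.I_mul_I] <;> norm_num

lemma R2_smul {X : Matrix (Fin 2) (Fin 2) ℂ} (r : ℂ) (hX : LM X ∈ Ealg) :
    LM (r•X) ∈ Ealg := by rw [LinearMap.map_smul]; exact smulE r hX

lemma n00 : LM (Fb 0 0) ∈ Ealg := by
  rw [g00]; exact R2_smul _ (by rw [map_add]; exact add_mem hP2 hLz)
lemma n11 : LM (Fb 1 1) ∈ Ealg := by
  rw [g11]; exact R2_smul _ (by rw [map_sub]; exact sub_mem hP2 hLz)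
lemma n01 : LM (Fb 0 1) ∈ Ealg := by
  rw [g01]
  exact R2_smul _ (by rw [map_add, LinearMap.map_smul]; exact add_mem hLx (smulE I hLy))
lemma n10 : LM (Fb 1 0) ∈ Ealg := by
  rw [g10]
  exact R2_smul _ (by rw [map_sub, LinearMap.map_smul]; exact sub_mem hLx (smulE I hLy))

lemma R2_all (i j : Fin 2) : LM (Fb i j) ∈ Ealg := by
  fin_cases i <;> fin_cases j
  exacts [n00, n01, n10, n11]

lemma L_mem (B : Matrix (Fin 2) (Fin 2) ℂ) : LM B ∈ Ealg := by
  rw [Matrix.matrix_eq_sum_single B, map_sum]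
  refine sum_mem fun k _ => ?_
  rw [map_sum]
  refine sum_mem fun l _ => ?_
  have : Matrix.single k l (B k l) = B k l • Fb k l := by
    rw [Fb, Matrix.smul_single, smul_eq_mul, mul_one]
  rw [this]
  exact R2_smul _ (R2_all k l)

lemma mem_Ealg_iff (N : Matrix II II ℂ) :
    N ∈ Ealg ↔ ∃ B C, N = LM B + QM C := by
  refine ⟨fwd, ?_⟩
  rintro ⟨B, C, rfl⟩
  exact add_mem (L_mem B) (Q_mem C)

/-! ### transport through the unitary + reindex -/

lemma rmul (M N : Matrix QB QB ℂ) :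
    Matrix.reindex eQI eQI (M * N) = Matrix.reindex eQI eQI M * Matrix.reindex eQI eQI N := by
  rw [Matrix.reindex_apply, Matrix.reindex_apply, Matrix.reindex_apply,
    Matrix.submatrix_mul_equiv]

lemma rmul' (M N : Matrix II II ℂ) :
    Matrix.reindex eQI.symm eQI.symm (M * N) =
      Matrix.reindex eQI.symm eQI.symm M * Matrix.reindex eQI.symm eQI.symm N := by
  rw [Matrix.reindex_apply, Matrix.reindex_apply, Matrix.reindex_apply,
    Matrix.submatrix_mul_equiv]

lemma rone : Matrix.reindex eQI eQI (1 : Matrix QB QB ℂ) = 1 := by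
  rw [Matrix.reindex_apply, Matrix.submatrix_one_equiv]

lemma rone' : Matrix.reindex eQI.symm eQI.symm (1 : Matrix II II ℂ) = 1 := by
  rw [Matrix.reindex_apply, Matrix.submatrix_one_equiv]

lemma rr (X : Matrix II II ℂ) :
    Matrix.reindex eQI eQI (Matrix.reindex eQI.symm eQI.symm X) = X := by
  simp

lemma rr' (X : Matrix QB QB ℂ) :
    Matrix.reindex eQI.symm eQI.symm (Matrix.reindex eQI eQI X) = X := by
  simp

def φ₀ : Matrix QB QB ℂ →ₐ[ℂ] Matrix II II ℂ where
  toFun M := Wᴴ * (Matrix.reindex eQI eQI M) * W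
  map_one' := by rw [rone, mul_one, W_unitary]
  map_mul' M N := by
    rw [rmul]
    simp only [Matrix.mul_assoc]
    rw [← Matrix.mul_assoc W Wᴴ, W_unitary', Matrix.one_mul]
  map_zero' := by simp
  map_add' M N := by
    simp [Matrix.reindex_apply, Matrix.submatrix_add, Matrix.add_mul, Matrix.mul_add]
  commutes' r := by
    simp only [Algebra.algebraMap_eq_smul_one, Matrix.reindex_apply, Matrix.submatrix_smul,
      Pi.smul_apply, Matrix.submatrix_one_equiv, Matrix.mul_smul, Matrix.smul_mul, mul_one]
    rw [W_unitary]

def φ : Matrix QB QB ℂ →⋆ₐ[ℂ] Matrix II II ℂ :=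
  { φ₀ with
    map_star' := fun M => by
      simp only [φ₀, AlgHom.coe_mk, RingHom.coe_mk, MonoidHom.coe_mk, OneHom.coe_mk,
        Matrix.star_eq_conjTranspose, Matrix.conjTranspose_mul,
        Matrix.conjTranspose_conjTranspose, Matrix.conjTranspose_reindex, Matrix.mul_assoc] }

def χ₀ : Matrix II II ℂ →ₐ[ℂ] Matrix QB QB ℂ where
  toFun N := Matrix.reindex eQI.symm eQI.symm (W * N * Wᴴ)
  map_one' := by rw [mul_one, W_unitary', rone']
  map_mul' M N := by
    rw [← rmul']
    congr 1
    simp only [Matrix.mul_assoc]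
    rw [← Matrix.mul_assoc Wᴴ W, W_unitary, Matrix.one_mul]
  map_zero' := by simp
  map_add' M N := by
    simp [Matrix.reindex_apply, Matrix.submatrix_add, Matrix.add_mul, Matrix.mul_add]
  commutes' r := by
    simp only [Algebra.algebraMap_eq_smul_one, Matrix.mul_smul, Matrix.smul_mul, mul_one,
      W_unitary', Matrix.reindex_apply, Matrix.submatrix_smul, Pi.smul_apply,
      Matrix.submatrix_one_equiv]

def χ : Matrix II II ℂ →⋆ₐ[ℂ] Matrix QB QB ℂ :=
  { χ₀ with
    map_star' := fun M => by
      simp only [χ₀, AlgHom.coe_mk, RingHom.coe_mk, MonoidHom.coe_mk, OneHom.coe_mk,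
        Matrix.star_eq_conjTranspose, Matrix.conjTranspose_mul,
        Matrix.conjTranspose_conjTranspose, Matrix.conjTranspose_reindex, Matrix.mul_assoc] }

lemma φ_apply (M : Matrix QB QB ℂ) : φ M = Wᴴ * (Matrix.reindex eQI eQI M) * W := rfl
lemma χ_apply (N : Matrix II II ℂ) :
    χ N = Matrix.reindex eQI.symm eQI.symm (W * N * Wᴴ) := rfl

lemma χφ (M : Matrix QB QB ℂ) : χ (φ M) = M := by
  rw [φ_apply, χ_apply]
  have : W * (Wᴴ * Matrix.reindex eQI eQI M * W) * Wᴴ = Matrix.reindex eQI eQI M := by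
    simp only [Matrix.mul_assoc]
    rw [← Matrix.mul_assoc W Wᴴ, W_unitary', Matrix.one_mul, Matrix.mul_one]
  rw [this, rr']

lemma φ_Sx : φ (collectiveSpin 3 pauliX) = DxM := by
  rw [φ_apply, reindex_Sx, Matrix.mul_assoc, SxE_W, ← Matrix.mul_assoc, W_unitary,
    Matrix.one_mul]
lemma φ_Sy : φ (collectiveSpin 3 pauliY) = DyM := by
  rw [φ_apply, reindex_Sy, Matrix.mul_assoc, SyE_W, ← Matrix.mul_assoc, W_unitary,
    Matrix.one_mul]
lemma φ_Sz : φ (collectiveSpin 3 pauliZ) = DzM := by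
  rw [φ_apply, reindex_Sz, Matrix.mul_assoc, SzE_W, ← Matrix.mul_assoc, W_unitary,
    Matrix.one_mul]

lemma χ_Dx : χ DxM = collectiveSpin 3 pauliX := by rw [← φ_Sx, χφ]
lemma χ_Dy : χ DyM = collectiveSpin 3 pauliY := by rw [← φ_Sy, χφ]
lemma χ_Dz : χ DzM = collectiveSpin 3 pauliZ := by rw [← φ_Sz, χφ]

lemma mem_transfer (M : Matrix QB QB ℂ) :
    M ∈ StarAlgebra.adjoin ℂ
        {collectiveSpin 3 pauliX, collectiveSpin 3 pauliY, collectiveSpin 3 pauliZ} ↔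
      φ M ∈ Ealg := by
  constructor
  · intro h
    induction h using StarAlgebra.adjoin_induction with
    | mem x hx =>
        rcases hx with rfl | rfl | rfl
        · rw [φ_Sx]; exact hDx
        · rw [φ_Sy]; exact hDy
        · rw [φ_Sz]; exact hDz
    | algebraMap r => rw [AlgHomClass.commutes]; exact Ealg.algebraMap_mem r
    | add x y _ _ hx hy => rw [map_add]; exact add_mem hx hy
    | mul x y _ _ hx hy => rw [_root_.map_mul]; exact mul_mem hx hy
    | star x _ hx => rw [map_star]; exact star_mem hx
  · intro h
    have key : ∀ N ∈ Ealg, χ N ∈ StarAlgebra.adjoin ℂ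
        {collectiveSpin 3 pauliX, collectiveSpin 3 pauliY, collectiveSpin 3 pauliZ} := by
      intro N hN
      induction hN using StarAlgebra.adjoin_induction with
      | mem x hx =>
          rcases hx with rfl | rfl | rfl
          · rw [χ_Dx]; exact StarAlgebra.subset_adjoin ℂ _ (by simp)
          · rw [χ_Dy]; exact StarAlgebra.subset_adjoin ℂ _ (by simp)
          · rw [χ_Dz]; exact StarAlgebra.subset_adjoin ℂ _ (by simp)
      | algebraMap r => rw [AlgHomClass.commutes]; exact (StarAlgebra.adjoin ℂ _).algebraMap_mem r
      | add x y _ _ hx hy => rw [map_add]; exact add_mem hx hy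
      | mul x y _ _ hx hy => rw [_root_.map_mul]; exact mul_mem hx hy
      | star x _ hx => rw [map_star]; exact star_mem hx
    have := key _ h
    rwa [χφ] at this

lemma LQ_fb (B : Matrix (Fin 2) (Fin 2) ℂ) (C : Matrix (Fin 4) (Fin 4) ℂ) :
    LM B + QM C = fromBlocks (B ⊗ₖ (1 : Matrix (Fin 2) (Fin 2) ℂ)) 0 0 C := by
  show fromBlocks _ _ _ _ + fromBlocks _ _ _ _ = _
  rw [Matrix.fromBlocks_add]
  simp

end
end CNW

open CNW in
theorem collective_noise_wedderburn_three_qubits :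
    ∃ (e : (Fin 3 → Fin 2) ≃ ((Fin 2 × Fin 2) ⊕ Fin 4))
      (U : Matrix (Fin 3 → Fin 2) (Fin 3 → Fin 2) ℂ),
      U ∈ Matrix.unitaryGroup (Fin 3 → Fin 2) ℂ ∧
      ∀ M : Matrix (Fin 3 → Fin 2) (Fin 3 → Fin 2) ℂ,
        M ∈ StarAlgebra.adjoin ℂ
            {collectiveSpin 3 pauliX, collectiveSpin 3 pauliY, collectiveSpin 3 pauliZ} ↔
          ∃ (B : Matrix (Fin 2) (Fin 2) ℂ) (C : Matrix (Fin 4) (Fin 4) ℂ),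
            Matrix.reindex e e (Uᴴ * M * U) =
              Matrix.fromBlocks (B ⊗ₖ (1 : Matrix (Fin 2) (Fin 2) ℂ)) 0 0 C := by
  classical
  refine ⟨eQI, Matrix.reindex eQI.symm eQI.symm W, ?_, ?_⟩
  · rw [Matrix.mem_unitaryGroup_iff']
    rw [Matrix.star_eq_conjTranspose, Matrix.conjTranspose_reindex, ← rmul', W_unitary, rone']
  · intro M
    have key : Matrix.reindex eQI eQI
        ((Matrix.reindex eQI.symm eQI.symm W)ᴴ * M * Matrix.reindex eQI.symm eQI.symm W) =
          φ M := by
      rw [Matrix.conjTranspose_reindex, φ_apply]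
      have hM : M = Matrix.reindex eQI.symm eQI.symm (Matrix.reindex eQI eQI M) := (rr' _).symm
      rw [hM, ← rmul', ← rmul', rr, rr']
    rw [mem_transfer, mem_Ealg_iff, key]
    constructor
    · rintro ⟨B, C, h⟩; exact ⟨B, C, by rw [h, LQ_fb]⟩
    · rintro ⟨B, C, h⟩; exact ⟨B, C, by rw [h, ← LQ_fb]⟩
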